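/- Let ℍ be the hyperbolic upper half-plane with its hyperbolic distance dist, on which SL(2, ℝ) acts by Möbius transformations, and let SO(2) ⊆ SL(2, ℝ) be the stabilizer of the point i. Then for all real s, t > 0 and every k ∈ SO(2), dist(e^s · i, e^t · i) ≤ dist(k • (e^s · i), e^t · i). That is, rotating a point of the positive imaginary axis about i never decreases its distance to another point of the same geodesic ray. (Instance of the paper's Lemma 3.2 for G = SL(2, ℝ).) -/

import Mathlib

open scoped MatrixGroups
open Matrix

lemma SO2_smul_I_eq_I (k : SL(2, ℝ))
    (hk : (↑k : Matrix (Fin 2) (Fin 2) ℝ)ᵀ * (↑k : Matrix (Fin 2) (Fin 2) ℝ) = 1) :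
    k • UpperHalfPlane.I = UpperHalfPlane.I := by
  revert hk
  induction' k using Matrix.SpecialLinearGroup.fin_two_induction with a b c d hdet
  intro hk
  have h00 := congrFun (congrFun hk 0) 0
  have h01 := congrFun (congrFun hk 0) 1
  have ea : (!![a, b; c, d] : Matrix (Fin 2) (Fin 2) ℝ) 0 0 = a := rfl
  have eb : (!![a, b; c, d] : Matrix (Fin 2) (Fin 2) ℝ) 0 1 = b := rfl
  have ec : (!![a, b; c, d] : Matrix (Fin 2) (Fin 2) ℝ) 1 0 = c := rfl
  have ed : (!![a, b; c, d] : Matrix (Fin 2) (Fin 2) ℝ) 1 1 = d := rfl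
  simp only [Matrix.mul_apply, Fin.sum_univ_two, Matrix.transpose_apply,
    Matrix.SpecialLinearGroup.coe_mk, ea, eb, ec, ed, Matrix.one_apply_eq,
    Matrix.one_apply_ne (by decide : (0 : Fin 2) ≠ 1)] at h00 h01
  have hda : d = a := by linear_combination a * hdet + c * h01 - d * h00
  have hbc : b = -c := by linear_combination a * h01 - b * h00 - c * hdet
  have hne : ((c : ℂ) * Complex.I + (a : ℂ)) ≠ 0 := by
    intro h
    have h1 : a = 0 := by have := congrArg Complex.re h; simpa using this
    have h2 : c = 0 := by have := congrArg Complex.im h; simpa using this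
    rw [h1, h2] at h00
    norm_num at h00
  apply UpperHalfPlane.ext
  refine (UpperHalfPlane.coe_specialLinearGroup_apply _ _).trans ?_
  show ((algebraMap ℝ ℝ _ : ℂ) * _ + (algebraMap ℝ ℝ _ : ℂ)) /
      ((algebraMap ℝ ℝ _ : ℂ) * _ + (algebraMap ℝ ℝ _ : ℂ)) = Complex.I
  simp only [Matrix.SpecialLinearGroup.coe_mk, ea, eb, ec, ed, Algebra.algebraMap_self_apply]
  have hIc : (UpperHalfPlane.I : ℂ) = Complex.I := rfl
  rw [hIc, hda, hbc, div_eq_iff hne]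
  push_cast
  ring_nf
  rw [Complex.I_sq]
  ring

theorem dist_imaginary_axis_le_dist_rotated
    (s t : ℝ) (hs : 0 < s) (ht : 0 < t)
    (k : SL(2, ℝ))
    (hk : (↑k : Matrix (Fin 2) (Fin 2) ℝ)ᵀ * (↑k : Matrix (Fin 2) (Fin 2) ℝ) = 1) :
    ∀ zs zt : UpperHalfPlane,
      zs = ⟨⟨0, Real.exp s⟩, Real.exp_pos s⟩ →
      zt = ⟨⟨0, Real.exp t⟩, Real.exp_pos t⟩ →
      dist zs zt ≤ dist (k • zs) zt := by
  intro zs zt hzs hzt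
  have hkI := SO2_smul_I_eq_I k hk
  have hIre : (UpperHalfPlane.I : UpperHalfPlane).re = 0 := rfl
  have hIim : (UpperHalfPlane.I : UpperHalfPlane).im = 1 := rfl
  have h1 : dist zs zt = |s - t| := by
    rw [UpperHalfPlane.dist_of_re_eq (by rw [hzs, hzt]; rfl)]
    rw [hzs, hzt]
    show dist (Real.log (Real.exp s)) (Real.log (Real.exp t)) = _
    rw [Real.log_exp, Real.log_exp, Real.dist_eq]
  have h2 : dist zt UpperHalfPlane.I = t := by
    rw [UpperHalfPlane.dist_of_re_eq (by rw [hzt]; rfl)]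
    rw [hzt, hIim]
    show dist (Real.log (Real.exp t)) (Real.log 1) = t
    rw [Real.log_exp, Real.log_one, Real.dist_eq, sub_zero, abs_of_pos ht]
  have h3 : dist (k • zs) UpperHalfPlane.I = s := by
    calc dist (k • zs) UpperHalfPlane.I = dist (k • zs) (k • UpperHalfPlane.I) := by rw [hkI]
      _ = dist zs UpperHalfPlane.I := dist_smul _ _ _
      _ = s := by
          rw [UpperHalfPlane.dist_of_re_eq (by rw [hzs]; rfl)]
          rw [hzs, hIim]
          show dist (Real.log (Real.exp s)) (Real.log 1) = s
          rw [Real.log_exp, Real.log_one, Real.dist_eq, sub_zero, abs_of_pos hs]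
  calc dist zs zt = |s - t| := h1
    _ = |dist (k • zs) UpperHalfPlane.I - dist zt UpperHalfPlane.I| := by rw [h2, h3]
    _ ≤ dist (k • zs) zt := abs_dist_sub_le _ _ _
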